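/- Let X be a δ-hyperbolic graph and let c be a vertex. If e and e' are two oriented edges originating at c, each lying as the first edge of some geodesic from c to the same point a, then the angle at c between e and the reverse of e' is at most 6δ. -/

import Mathlib

/-- A graph: vertices, oriented edges, origin/terminus maps, and a
fixed-point-free edge-reversing involution. -/
structure MGraph where
  V : Type
  E : Type
  o : E → V
  t : E → V
  rev : E → E
  rev_o : ∀ e, o (rev e) = t e
  rev_t : ∀ e, t (rev e) = o e
  rev_rev : ∀ e, rev (rev e) = e
  rev_ne : ∀ e, rev e ≠ e

namespace MGraph

variable (X : MGraph)

/-- A walk from `x` to `y` given by a list of consecutive edges. -/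
def IsWalk : List X.E → X.V → X.V → Prop
  | [], x, y => x = y
  | e :: es, x, y => X.o e = x ∧ IsWalk es (X.t e) y

/-- The vertices visited by a walk starting at `x`. -/
def walkVerts : X.V → List X.E → List X.V
  | x, [] => [x]
  | x, e :: es => x :: walkVerts (X.t e) es

/-- The graph metric (length of each edge is 1), valued in `ℕ∞`. -/
noncomputable def dist (x y : X.V) : ℕ∞ :=
  sInf {n : ℕ∞ | ∃ es, X.IsWalk es x y ∧ (es.length : ℕ∞) = n}

/-- The distance from `x` to `y` in the graph with the vertex `v` removed. -/
noncomputable def delDist (v x y : X.V) : ℕ∞ :=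
  sInf {n : ℕ∞ | ∃ es, X.IsWalk es x y ∧ v ∉ X.walkVerts x es ∧ (es.length : ℕ∞) = n}

/-- The angle at `v = t e1 = o e2` between two edges `e1, e2`: the distance
from `o e1` to `t e2` in the graph with the vertex `t e1` removed. -/
noncomputable def angle (e1 e2 : X.E) : ℕ∞ :=
  X.delDist (X.t e1) (X.o e1) (X.t e2)

/-- A geodesic is a walk whose length realizes the distance. -/
def IsGeodesic (es : List X.E) (x y : X.V) : Prop :=
  X.IsWalk es x y ∧ (es.length : ℕ∞) = X.dist x y

/-- `∠_c(x1,x2) > θ` : there are edges `e1, e2` with `t e1 = o e2 = c`, each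
lying on a geodesic between `c` and `x_i`, making an angle `> θ` at `c`. -/
def AngleGT (c x1 x2 : X.V) (θ : ℕ∞) : Prop :=
  ∃ (e1 e2 : X.E) (es1 es2 : List X.E), X.t e1 = c ∧ X.o e2 = c ∧
    X.IsGeodesic (X.rev e1 :: es1) c x1 ∧ X.IsGeodesic (e2 :: es2) c x2 ∧
    θ < X.angle e1 e2

/-- All pairs of consecutive edges of a walk make an angle at most `θ`. -/
def AngleBounded (θ : ℕ∞) : List X.E → Prop
  | [] => True
  | [_] => True
  | e :: e' :: es => X.angle e e' ≤ θ ∧ AngleBounded θ (e' :: es)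

/-- `v` is a vertex of the cone of parameter `θ` around the oriented edge `e`:
it lies on a path starting at `o e` by the edge `e`, of length at most `θ`,
whose consecutive edges make angles at most `θ`. -/
def InConeV (θ : ℕ∞) (e : X.E) (v : X.V) : Prop :=
  ∃ (es : List X.E) (y : X.V), X.IsWalk (e :: es) (X.o e) y ∧
    ((e :: es).length : ℕ∞) ≤ θ ∧ X.AngleBounded θ (e :: es) ∧
    v ∈ X.walkVerts (X.o e) (e :: es)

/-- `ε` is an edge of the cone of parameter `θ` around the oriented edge `e`. -/
def InConeE (θ : ℕ∞) (e ε : X.E) : Prop :=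
  ∃ (es : List X.E) (y : X.V), X.IsWalk (e :: es) (X.o e) y ∧
    ((e :: es).length : ℕ∞) ≤ θ ∧ X.AngleBounded θ (e :: es) ∧
    (ε ∈ e :: es ∨ X.rev ε ∈ e :: es)

/-- A graph is fine if for each edge `e` and each `L`, only finitely many
edges arrive at `o e` making an angle at most `L` with `e`. -/
def Fine : Prop :=
  ∀ (e : X.E) (L : ℕ), {e' : X.E | X.t e' = X.o e ∧ X.angle e' e ≤ (L : ℕ∞)}.Finite

/-- δ-hyperbolicity: geodesic triangles are δ-thin. -/
def Hyperbolic (δ : ℕ) : Prop :=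
  ∀ (a b c : X.V) (p q r : List X.E),
    X.IsGeodesic p a b → X.IsGeodesic q b c → X.IsGeodesic r a c →
    ∀ v ∈ X.walkVerts a p, ∃ w, (w ∈ X.walkVerts b q ∨ w ∈ X.walkVerts a r) ∧
      X.dist v w ≤ (δ : ℕ∞)

/-- The four point inequality form of δ-hyperbolicity. -/
def FourPoint (δ : ℕ) : Prop :=
  ∀ a x y y' : X.V,
    X.dist a x + X.dist y y' ≤
      max (X.dist a y + X.dist y' x) (X.dist a y' + X.dist y x) + (δ : ℕ∞)

/-- Connectedness. -/
def Connected : Prop := ∀ x y : X.V, ∃ es, X.IsWalk es x y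

/-- `t` is on an `α`-geodesic between `x` and `a`. -/
def OnAlphaGeod (α : ℕ∞) (t x a : X.V) : Prop :=
  X.dist x t + X.dist t a ≤ X.dist x a + α

/-- The set `𝓔_{a,x}(ρ)` of edges at distance `ρ` from `a` lying on
geodesics between `a` and `x`. -/
def GeodEdgeAt (a x : X.V) (ρ : ℕ∞) (e : X.E) : Prop :=
  X.dist a (X.o e) = ρ ∧ ∃ es, (X.IsGeodesic es a x ∨ X.IsGeodesic es x a) ∧ e ∈ es

/-- The set `U_α[a,x]` of points on `α`-conical-geodesics between `x` and `a`. -/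
def ConicalSet (α : ℕ) (a x : X.V) : Set X.V :=
  {t | X.OnAlphaGeod (α : ℕ∞) t x a ∧ X.dist a t ≤ X.dist a x ∧
       ∀ e, X.GeodEdgeAt a x (X.dist a t) e → X.InConeV ((40 * α : ℕ) : ℕ∞) e t}

/-! ### Auxiliary lemmas -/

lemma isWalk_append {es1 es2 : List X.E} {x y z : X.V}
    (h1 : X.IsWalk es1 x y) (h2 : X.IsWalk es2 y z) : X.IsWalk (es1 ++ es2) x z := by
  induction es1 generalizing x with
  | nil => have hxy : x = y := h1; subst hxy; simpa using h2
  | cons f fs ih => exact ⟨h1.1, ih h1.2⟩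

lemma dist_le_length {es : List X.E} {x y : X.V} (h : X.IsWalk es x y) :
    X.dist x y ≤ (es.length : ℕ∞) :=
  sInf_le ⟨es, h, rfl⟩

lemma dist_self (x : X.V) : X.dist x x = 0 := by
  refine le_antisymm ?_ zero_le
  have h : X.IsWalk [] x x := rfl
  simpa using X.dist_le_length h

lemma exists_walk_len_eq_dist {x y : X.V} (h : X.dist x y ≠ ⊤) :
    ∃ es, X.IsWalk es x y ∧ (es.length : ℕ∞) = X.dist x y := by
  have hne : {n : ℕ∞ | ∃ es, X.IsWalk es x y ∧ (es.length : ℕ∞) = n}.Nonempty := by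
    by_contra hc
    rw [Set.not_nonempty_iff_eq_empty] at hc
    exact h (by simp [MGraph.dist, hc])
  have hmem := csInf_mem hne
  obtain ⟨es, hw, hl⟩ := hmem
  exact ⟨es, hw, hl⟩

lemma dist_triangle (x y z : X.V) : X.dist x z ≤ X.dist x y + X.dist y z := by
  rcases eq_or_ne (X.dist x y) ⊤ with h | h
  · simp [h]
  rcases eq_or_ne (X.dist y z) ⊤ with h' | h'
  · simp [h']
  obtain ⟨es1, hw1, hl1⟩ := X.exists_walk_len_eq_dist h
  obtain ⟨es2, hw2, hl2⟩ := X.exists_walk_len_eq_dist h'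
  calc X.dist x z ≤ (((es1 ++ es2).length : ℕ) : ℕ∞) :=
        X.dist_le_length (X.isWalk_append hw1 hw2)
    _ = X.dist x y + X.dist y z := by
        rw [List.length_append, Nat.cast_add, hl1, hl2]

lemma isWalk_reverse {es : List X.E} {x y : X.V} (h : X.IsWalk es x y) :
    X.IsWalk ((es.map X.rev).reverse) y x := by
  induction es generalizing x with
  | nil => have hxy : x = y := h; subst hxy; exact rfl
  | cons f fs ih =>
    obtain ⟨rfl, h2⟩ := h
    have hrev := ih h2
    simp only [List.map_cons, List.reverse_cons]
    refine X.isWalk_append hrev ?_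
    exact ⟨X.rev_o f, X.rev_t f⟩

lemma dist_comm (x y : X.V) : X.dist x y = X.dist y x := by
  have key : ∀ u v : X.V, X.dist u v ≤ X.dist v u := by
    intro u v
    rcases eq_or_ne (X.dist v u) ⊤ with h | h
    · simp [h]
    obtain ⟨es, hw, hl⟩ := X.exists_walk_len_eq_dist h
    calc X.dist u v ≤ (((es.map X.rev).reverse.length : ℕ) : ℕ∞) :=
          X.dist_le_length (X.isWalk_reverse hw)
      _ = X.dist v u := by simpa using hl
  exact le_antisymm (key x y) (key y x)

lemma mem_walkVerts_split {es : List X.E} {x y v : X.V}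
    (h : X.IsWalk es x y) (hv : v ∈ X.walkVerts x es) :
    ∃ es1 es2, es = es1 ++ es2 ∧ X.IsWalk es1 x v ∧ X.IsWalk es2 v y := by
  induction es generalizing x with
  | nil =>
    simp only [MGraph.walkVerts, List.mem_singleton] at hv
    subst hv
    exact ⟨[], [], rfl, rfl, h⟩
  | cons f fs ih =>
    obtain ⟨rfl, h2⟩ := h
    simp only [MGraph.walkVerts, List.mem_cons] at hv
    rcases hv with rfl | hv
    · exact ⟨[], f :: fs, rfl, rfl, rfl, h2⟩
    · obtain ⟨es1, es2, heq, hw1, hw2⟩ := ih h2 hv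
      exact ⟨f :: es1, es2, by rw [heq]; rfl, ⟨rfl, hw1⟩, hw2⟩

lemma start_mem_walkVerts (x : X.V) (es : List X.E) : x ∈ X.walkVerts x es := by
  cases es <;> simp [MGraph.walkVerts]

lemma end_mem_walkVerts {es : List X.E} {x y : X.V} (h : X.IsWalk es x y) :
    y ∈ X.walkVerts x es := by
  induction es generalizing x with
  | nil => have hxy : x = y := h; subst hxy; simp [MGraph.walkVerts]
  | cons f fs ih =>
    obtain ⟨rfl, h2⟩ := h
    simp only [MGraph.walkVerts, List.mem_cons]
    exact Or.inr (ih h2)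

lemma mem_walkVerts_append {es1 es2 : List X.E} {x y v : X.V} (h : X.IsWalk es1 x y) :
    v ∈ X.walkVerts x (es1 ++ es2) ↔ v ∈ X.walkVerts x es1 ∨ v ∈ X.walkVerts y es2 := by
  induction es1 generalizing x with
  | nil =>
    have hxy : x = y := h; subst hxy
    simp only [List.nil_append, MGraph.walkVerts, List.mem_singleton]
    constructor
    · exact Or.inr
    · rintro (rfl | hv)
      · exact X.start_mem_walkVerts _ es2
      · exact hv
  | cons f fs ih =>
    obtain ⟨rfl, h2⟩ := h
    simp only [List.cons_append, List.append_eq, MGraph.walkVerts, List.mem_cons,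
      ih h2, or_assoc]

lemma mem_walkVerts_of_prefix {es1 : List X.E} (es2 : List X.E) {x v : X.V}
    (hv : v ∈ X.walkVerts x es1) : v ∈ X.walkVerts x (es1 ++ es2) := by
  induction es1 generalizing x with
  | nil =>
    simp only [MGraph.walkVerts, List.mem_singleton] at hv
    subst hv
    exact X.start_mem_walkVerts _ es2
  | cons f fs ih =>
    simp only [MGraph.walkVerts, List.mem_cons, List.cons_append] at hv ⊢
    rcases hv with rfl | hv
    · exact Or.inl rfl
    · exact Or.inr (ih hv)

lemma walk_take_drop {es : List X.E} {x y : X.V} (h : X.IsWalk es x y) (i : ℕ) :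
    ∃ v, X.IsWalk (es.take i) x v ∧ X.IsWalk (es.drop i) v y := by
  induction es generalizing x i with
  | nil => exact ⟨x, by simp only [List.take_nil]; exact rfl, by simpa using h⟩
  | cons f fs ih =>
    cases i with
    | zero => exact ⟨x, rfl, h⟩
    | succ n =>
      obtain ⟨rfl, h2⟩ := h
      obtain ⟨v, hv1, hv2⟩ := ih h2 n
      exact ⟨v, ⟨rfl, hv1⟩, hv2⟩

lemma start_not_mem_tail {f : X.E} {fs : List X.E} {x y : X.V}
    (h : X.IsGeodesic (f :: fs) x y) : x ∉ X.walkVerts (X.t f) fs := by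
  intro hx
  obtain ⟨⟨hof, hw2⟩, hlen⟩ := h
  obtain ⟨h1, h2, heq, hw1', hw2'⟩ := X.mem_walkVerts_split hw2 hx
  have hle : X.dist x y ≤ (h2.length : ℕ∞) := X.dist_le_length hw2'
  have hlt : (h2.length : ℕ∞) < X.dist x y := by
    rw [← hlen]
    have hh : h2.length ≤ fs.length := by
      rw [heq]; simp [List.length_append]
    simp only [List.length_cons]
    exact_mod_cast Nat.lt_succ_of_le hh
  exact absurd (hle.trans_lt hlt) (lt_irrefl _)

lemma geodesic_split_dist {es es1 es2 : List X.E} {x y v : X.V} (h : X.IsGeodesic es x y)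
    (heq : es = es1 ++ es2) (h1 : X.IsWalk es1 x v) (h2 : X.IsWalk es2 v y) :
    X.dist x v = (es1.length : ℕ∞) ∧ X.dist v y = (es2.length : ℕ∞) := by
  have ha := X.dist_le_length h1
  have hb := X.dist_le_length h2
  have htri := X.dist_triangle x v y
  have hxy : X.dist x y = ((es1.length : ℕ) : ℕ∞) + ((es2.length : ℕ) : ℕ∞) := by
    rw [← h.2, heq, List.length_append, Nat.cast_add]
  have ha' : X.dist x v ≠ ⊤ := (ha.trans_lt (lt_top_iff_ne_top.2 (ENat.coe_ne_top _))).ne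
  have hb' : X.dist v y ≠ ⊤ := (hb.trans_lt (lt_top_iff_ne_top.2 (ENat.coe_ne_top _))).ne
  lift X.dist x v to ℕ using ha' with A hA
  lift X.dist v y to ℕ using hb' with B hB
  rw [hxy] at htri
  have htri' : es1.length + es2.length ≤ A + B := by exact_mod_cast htri
  have ha2 : A ≤ es1.length := by exact_mod_cast ha
  have hb2 : B ≤ es2.length := by exact_mod_cast hb
  constructor <;> · exact_mod_cast by omega

lemma mem_walkVerts_reverse {es : List X.E} {x y v : X.V} (h : X.IsWalk es x y) :
    v ∈ X.walkVerts y ((es.map X.rev).reverse) ↔ v ∈ X.walkVerts x es := by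
  induction es generalizing x with
  | nil => have hxy : x = y := h; subst hxy; simp
  | cons f fs ih =>
    obtain ⟨rfl, h2⟩ := h
    have hrev : X.IsWalk ((fs.map X.rev).reverse) y (X.t f) := X.isWalk_reverse h2
    simp only [List.map_cons, List.reverse_cons]
    rw [X.mem_walkVerts_append hrev, ih h2]
    simp only [MGraph.walkVerts, List.mem_cons, List.not_mem_nil, or_false, X.rev_t]
    have hst : X.t f ∈ X.walkVerts (X.t f) fs := X.start_mem_walkVerts _ _
    constructor
    · rintro (hv | rfl | rfl)
      · exact Or.inr hv
      · exact Or.inr hst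
      · exact Or.inl rfl
    · rintro (rfl | hv)
      · exact Or.inr (Or.inr rfl)
      · exact Or.inl hv

end MGraph

/-- if `e, e'` both originate at `c` and each is the first edge of
a geodesic from `c` to the same point `a`, then the angle at `c` between `e`
and the reverse of `e'` is at most `6δ`. -/
theorem stmt_2 (X : MGraph) (δ : ℕ) (hδpos : 0 < δ) (hδ : X.Hyperbolic δ)
    (c a : X.V) (e e' : X.E) (he : X.o e = c) (he' : X.o e' = c)
    (hg : ∃ es, X.IsGeodesic (e :: es) c a) (hg' : ∃ es, X.IsGeodesic (e' :: es) c a) :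
    X.angle (X.rev e') e ≤ ((6 * δ : ℕ) : ℕ∞) := by
  obtain ⟨es, hge⟩ := hg
  obtain ⟨es', hge'⟩ := hg'
  have hNN : es'.length = es.length := by
    have h12 : (((e' :: es').length : ℕ) : ℕ∞) = (((e :: es).length : ℕ) : ℕ∞) := by
      rw [hge.2, hge'.2]
    have h13 : (e' :: es').length = (e :: es).length := by exact_mod_cast h12
    simpa using h13
  set N := es.length with hN
  have hang : X.angle (X.rev e') e = X.delDist c (X.t e') (X.t e) := by
    simp [MGraph.angle, X.rev_o, X.rev_t, he']
  rw [hang]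
  have key : ∀ W : List X.E, X.IsWalk W (X.t e') (X.t e) → c ∉ X.walkVerts (X.t e') W →
      W.length ≤ 6 * δ → X.delDist c (X.t e') (X.t e) ≤ ((6 * δ : ℕ) : ℕ∞) := by
    intro W hW hc hL
    refine le_trans (sInf_le ⟨W, hW, hc, rfl⟩) ?_
    exact_mod_cast hL
  by_cases hcase : N + 1 ≤ 2 * δ
  · -- short case: go all the way to `a` and come back
    have hwe' : X.IsWalk es' (X.t e') a := hge'.1.2
    have hwe : X.IsWalk es (X.t e) a := hge.1.2
    refine key _ (X.isWalk_append hwe' (X.isWalk_reverse hwe)) ?_ ?_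
    · intro hcmem
      rcases (X.mem_walkVerts_append hwe').1 hcmem with h | h
      · exact X.start_not_mem_tail hge' h
      · exact X.start_not_mem_tail hge ((X.mem_walkVerts_reverse hwe).1 h)
    · simp only [List.length_append, List.length_reverse, List.length_map, hNN]
      omega
  · -- long case
    push_neg at hcase
    have h2δ : 2 * δ ≤ N := by omega
    obtain ⟨v, hv1, hv2⟩ := X.walk_take_drop hge'.1 (2 * δ)
    have htake : (e' :: es').take (2 * δ) = e' :: es'.take (2 * δ - 1) := by
      have h1 : 2 * δ = (2 * δ - 1) + 1 := by omega
      rw [h1]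
      rfl
    have hdcv : X.dist c v = ((2 * δ : ℕ) : ℕ∞) := by
      rw [(X.geodesic_split_dist hge' (List.take_append_drop (2 * δ) (e' :: es')).symm
        hv1 hv2).1]
      have hl : ((e' :: es').take (2 * δ)).length = 2 * δ := by
        simp only [List.length_take, List.length_cons, hNN]
        omega
      rw [hl]
    have hvmem : v ∈ X.walkVerts c (e' :: es') := by
      have hend := X.end_mem_walkVerts hv1
      have := X.mem_walkVerts_of_prefix ((e' :: es').drop (2 * δ)) hend
      rwa [List.take_append_drop] at this
    have hgeaa : X.IsGeodesic ([] : List X.E) a a := ⟨rfl, by simp [X.dist_self]⟩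
    obtain ⟨w, hwmem, hdvw⟩ := hδ c a a (e' :: es') [] (e :: es) hge' hgeaa hge v hvmem
    have hwmem' : w ∈ X.walkVerts c (e :: es) := by
      rcases hwmem with h | h
      · simp only [MGraph.walkVerts, List.mem_singleton] at h
        subst h
        exact X.end_mem_walkVerts hge.1
      · exact h
    obtain ⟨f1, f2, heq, hwf1, hwf2⟩ := X.mem_walkVerts_split hge.1 hwmem'
    have hdcw := (X.geodesic_split_dist hge heq hwf1 hwf2).1
    have hf1ne : f1 ≠ [] := by
      rintro rfl
      have hcw : c = w := hwf1
      subst hcw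
      have h1 : ((2 * δ : ℕ) : ℕ∞) ≤ ((δ : ℕ) : ℕ∞) := by
        rw [← hdcv, X.dist_comm]
        exact hdvw
      have h2 : 2 * δ ≤ δ := by exact_mod_cast h1
      omega
    obtain ⟨g, f1', rfl⟩ := List.exists_cons_of_ne_nil hf1ne
    have hgeq : e = g ∧ es = f1' ++ f2 := by
      rw [List.cons_append] at heq
      exact ⟨(List.cons.injEq _ _ _ _ ▸ heq : _ ∧ _).1, (List.cons.injEq _ _ _ _ ▸ heq).2⟩
    obtain ⟨rfl, hes⟩ := hgeq
    have h_f1' : X.IsWalk f1' (X.t e) w := hwf1.2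
    have hdvw_ne : X.dist v w ≠ ⊤ :=
      (hdvw.trans_lt (lt_top_iff_ne_top.2 (ENat.coe_ne_top _))).ne
    obtain ⟨m, hm, hmlen⟩ := X.exists_walk_len_eq_dist hdvw_ne
    have hmδ : m.length ≤ δ := by
      have : (m.length : ℕ∞) ≤ ((δ : ℕ) : ℕ∞) := by rw [hmlen]; exact hdvw
      exact_mod_cast this
    have hf1le : f1'.length + 1 ≤ 3 * δ := by
      have h3 : X.dist c w ≤ ((2 * δ : ℕ) : ℕ∞) + ((δ : ℕ) : ℕ∞) := by
        refine le_trans (X.dist_triangle c v w) ?_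
        rw [hdcv]
        exact add_le_add le_rfl hdvw
      rw [hdcw] at h3
      have h4 : (((e :: f1').length : ℕ) : ℕ∞) ≤ ((3 * δ : ℕ) : ℕ∞) := by
        refine le_trans h3 ?_
        rw [← Nat.cast_add]
        exact_mod_cast le_of_eq (by ring)
      have h5 : (e :: f1').length ≤ 3 * δ := by exact_mod_cast h4
      simpa using h5
    have hwt1 : X.IsWalk (es'.take (2 * δ - 1)) (X.t e') v := by
      rw [htake] at hv1
      exact hv1.2
    have ht1len : (es'.take (2 * δ - 1)).length = 2 * δ - 1 := by
      simp only [List.length_take, hNN]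
      omega
    have hW : X.IsWalk (es'.take (2 * δ - 1) ++ (m ++ (f1'.map X.rev).reverse))
        (X.t e') (X.t e) :=
      X.isWalk_append hwt1 (X.isWalk_append hm (X.isWalk_reverse h_f1'))
    refine key _ hW ?_ ?_
    · intro hcmem
      rcases (X.mem_walkVerts_append hwt1).1 hcmem with h | h
      · have h' : c ∈ X.walkVerts (X.t e') es' := by
          have := X.mem_walkVerts_of_prefix (es'.drop (2 * δ - 1)) h
          rwa [List.take_append_drop] at this
        exact X.start_not_mem_tail hge' h'
      rcases (X.mem_walkVerts_append hm).1 h with h | h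
      · obtain ⟨h1, h2, hmeq, hw1, hw2⟩ := X.mem_walkVerts_split hm h
        have hd1 : X.dist v c ≤ (h1.length : ℕ∞) := X.dist_le_length hw1
        have hlen1 : h1.length ≤ δ := by
          have : m.length = h1.length + h2.length := by rw [hmeq]; simp
          omega
        have hcontra : ((2 * δ : ℕ) : ℕ∞) ≤ ((δ : ℕ) : ℕ∞) := by
          rw [← hdcv, X.dist_comm]
          exact hd1.trans (by exact_mod_cast hlen1)
        have : 2 * δ ≤ δ := by exact_mod_cast hcontra
        omega
      · have h' : c ∈ X.walkVerts (X.t e) f1' := (X.mem_walkVerts_reverse h_f1').1 h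
        have h'' : c ∈ X.walkVerts (X.t e) es := by
          rw [hes]
          exact X.mem_walkVerts_of_prefix f2 h'
        exact X.start_not_mem_tail hge h''
    · simp only [List.length_append, List.length_reverse, List.length_map, ht1len]
      omega
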